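/- (Single-action finite dependence; Corollary 1.) Let X be a finite nonempty set and D a finite set of actions with baseline 0, β ∈ ℝ, ρ ≥ 1. Let V, v, u, e, f be as above: V(x) = v(d, x) + e(d, x) and v(d, x) = u(d, x) + β Σ_{x'} f(x' | d, x) V(x') for all d, x. Let d*_1, …, d*_ρ : X → D be a sequence of decision rules, let F(d*_s) be the X×X matrix whose (x, x') entry is f(x' | d*_s(x), x), and let c(d*_s)(x) = u(d*_s(x), x) + e(d*_s(x), x). If f̃(· | d, x)ᵀ F(d*_1) ⋯ F(d*_ρ) = 0 for all d ∈ D, x ∈ X, where f̃(· | d, x) = f(· | d, x) − f(· | 0, x), then for all d, x: v(d, x) − v(0, x) = u(d, x) − u(0, x) + Σ_{τ=1}^{ρ} β^τ f̃(· | d, x)ᵀ ( F(d*_1) ⋯ F(d*_{τ−1}) ) c(d*_τ), where the empty product is the identity matrix. -/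
import Mathlib


open Matrix

/-- The one-step transition matrix induced by a decision rule `d* : X → D`, with row
`x` equal to `f(· | d*(x), x)`. -/
noncomputable def ruleTransMatrix {X D : Type*} [Fintype X]
    (f : D → X → X → ℝ) (dstar : X → D) : Matrix X X ℝ :=
  Matrix.of fun x x' => f (dstar x) x x'

/-- The partial products `F(d*₁) ⋯ F(d*_k)` of decision-rule transition matrices; the
empty product (`k = 0`) is the identity matrix. -/
noncomputable def prodRuleTransMatrix {X D : Type*} [Fintype X] [DecidableEq X]
    (f : D → X → X → ℝ) (ds : ℕ → X → D) : ℕ → Matrix X X ℝ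
  | 0 => 1
  | (k + 1) => prodRuleTransMatrix f ds k * ruleTransMatrix f (ds (k + 1))

/-- Single-action finite dependence (Corollary 1): if following the sequence of
decision rules `d*₁, …, d*_ρ` kills the one-step transition differences relative to
the baseline action `d₀`, then the value differences are expressed by ρ periods of
payoffs `c(d*_s)(x) = u(d*_s(x), x) + e(d*_s(x), x)` along those rules. -/
theorem single_action_finite_dependence
    {X D : Type*} [Fintype X] [DecidableEq X] [Nonempty X] [Fintype D]
    (d₀ : D) (β : ℝ) (ρ : ℕ) (hρ : 1 ≤ ρ)
    (V : X → ℝ) (v : D → X → ℝ) (u : D → X → ℝ) (e : D → X → ℝ)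
    (f : D → X → X → ℝ)
    (hAM : ∀ (d : D) (x : X), V x = v d x + e d x)
    (hBellman : ∀ (d : D) (x : X),
      v d x = u d x + β * ∑ x' : X, f d x x' * V x')
    (ds : ℕ → X → D)
    (hdep : ∀ (d : D) (x : X),
      (fun x₁ => f d x x₁ - f d₀ x x₁) ᵥ* prodRuleTransMatrix f ds ρ = 0) :
    ∀ (d : D) (x : X),
      v d x - v d₀ x = (u d x - u d₀ x)
        + ∑ τ ∈ Finset.range ρ, β ^ (τ + 1) *
            ∑ x' : X,
              ((fun x₁ => f d x x₁ - f d₀ x x₁) ᵥ* prodRuleTransMatrix f ds τ) x' *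
                (u (ds (τ + 1) x') x' + e (ds (τ + 1) x') x') := by
  intro d x
  set w : ℕ → X → ℝ := fun τ => (fun x₁ => f d x x₁ - f d₀ x x₁) ᵥ* prodRuleTransMatrix f ds τ with hw
  set g : ℕ → ℝ := fun τ => ∑ x' : X, w τ x' * V x' with hg
  set C : ℕ → ℝ := fun τ => ∑ x' : X, w τ x' * (u (ds (τ + 1) x') x' + e (ds (τ + 1) x') x') with hC
  have hVc : ∀ (d' : D) (x' : X), V x' = (u d' x' + e d' x') + β * ∑ y : X, f d' x' y * V y := by
    intro d' x'
    rw [hAM d' x', hBellman d' x']; ring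
  have hwsucc : ∀ τ (x' : X), w (τ + 1) x' = ∑ y : X, w τ y * f (ds (τ + 1) y) y x' := by
    intro τ x'
    show ((fun x₁ => f d x x₁ - f d₀ x x₁) ᵥ* (prodRuleTransMatrix f ds τ * ruleTransMatrix f (ds (τ + 1)))) x' = _
    rw [← Matrix.vecMul_vecMul]
    rfl
  have hstep : ∀ τ, g τ = C τ + β * g (τ + 1) := by
    intro τ
    have : g τ = ∑ x' : X, w τ x' * ((u (ds (τ + 1) x') x' + e (ds (τ + 1) x') x')
        + β * ∑ y : X, f (ds (τ + 1) x') x' y * V y) := by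
      apply Finset.sum_congr rfl
      intro x' _
      rw [← hVc (ds (τ + 1) x') x']
    rw [this]
    have : g (τ + 1) = ∑ x' : X, ∑ y : X, w τ y * f (ds (τ + 1) y) y x' * V x' := by
      apply Finset.sum_congr rfl
      intro x' _
      rw [hwsucc τ x', Finset.sum_mul]
    rw [this, Finset.sum_comm]
    rw [Finset.mul_sum, ← Finset.sum_add_distrib]
    apply Finset.sum_congr rfl
    intro x' _
    rw [mul_add]
    congr 1
    rw [Finset.mul_sum, Finset.mul_sum, Finset.mul_sum]
    apply Finset.sum_congr rfl
    intro y _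
    ring
  have hgrho : g ρ = 0 := by
    have := hdep d x
    simp only [hg, hw, this]
    simp
  have key : ∀ n, g 0 = (∑ τ ∈ Finset.range n, β ^ τ * C τ) + β ^ n * g n := by
    intro n
    induction n with
    | zero => simp
    | succ n ih =>
      rw [ih, Finset.sum_range_succ, hstep n]
      ring
  have hg0 : g 0 = ∑ τ ∈ Finset.range ρ, β ^ τ * C τ := by
    rw [key ρ, hgrho]; ring
  have hv : v d x - v d₀ x = (u d x - u d₀ x) + β * g 0 := by
    rw [hBellman d x, hBellman d₀ x]
    have : g 0 = ∑ x' : X, (f d x x' - f d₀ x x') * V x' := by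
      apply Finset.sum_congr rfl
      intro x' _
      congr 1
      show ((fun x₁ => f d x x₁ - f d₀ x x₁) ᵥ* (1 : Matrix X X ℝ)) x' = _
      rw [Matrix.vecMul_one]
    rw [this]
    have h2 : (∑ x' : X, (f d x x' - f d₀ x x') * V x')
        = (∑ x' : X, f d x x' * V x') - ∑ x' : X, f d₀ x x' * V x' := by
      rw [← Finset.sum_sub_distrib]
      apply Finset.sum_congr rfl
      intro y _
      ring
    rw [h2]; ring
  rw [hv, hg0, Finset.mul_sum]
  congr 1
  apply Finset.sum_congr rfl
  intro τ _
  rw [pow_succ]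
  ring
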